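/- Let X be a cubical object with connections in an abelian category A, and let F(X) be the chain subcomplex of N(X) with F(X)_0 = 0, F(X)_1 = 0, and F(X)_n = Γ_1(N(X)_{n−1}) + … + Γ_{n−1}(N(X)_{n−1}) for n ≥ 2. Then the canonical projection π : N(X) → N(X)/F(X) is a chain homotopy equivalence. -/

import Mathlib

open CategoryTheory CategoryTheory.Limits

universe v u

structure Precub (C : Type u) [Category.{v} C] where
  X : ℕ → C
  d : ∀ n : ℕ, ℕ → Bool → (X (n + 1) ⟶ X n)
  dd : ∀ (n i j : ℕ) (α ε : Bool), 1 ≤ i → i < j → j ≤ n + 2 →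
    d (n + 1) j ε ≫ d n i α = d (n + 1) i α ≫ d n (j - 1) ε

/-- The subobject `N_n(X) ⊆ X_n`: intersection of the kernels of the faces `∂_i^1`. -/
noncomputable def NSub {C : Type u} [Category.{v} C] [Abelian C] (X : Precub C) :
    ∀ n, Subobject (X.X n)
  | 0 => ⊤
  | (n + 1) => (Finset.Icc 1 (n + 1)).inf fun i => kernelSubobject (X.d n i true)

/-- The subobject `M_n(X) ⊆ X_n`. -/
noncomputable def MSub {C : Type u} [Category.{v} C] [Abelian C] (X : Precub C) :
    ∀ n, Subobject (X.X n)
  | 0 => ⊤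
  | (n + 1) => ((Finset.Icc 1 (n + 1)).inf fun i => kernelSubobject (X.d n i true)) ⊓
      ((Finset.Icc 1 n).inf fun i => kernelSubobject (X.d n i false))

structure Pseudocub (C : Type u) [Category.{v} C] extends Precub C where
  s : ∀ n : ℕ, ℕ → (X n ⟶ X (n + 1))
  ds_lt : ∀ (n i j : ℕ) (α : Bool), 1 ≤ i → i < j → j ≤ n + 2 →
    s (n + 1) j ≫ d (n + 1) i α = d n i α ≫ s n (j - 1)
  ds_eq : ∀ (n i : ℕ) (α : Bool), 1 ≤ i → i ≤ n + 1 → s n i ≫ d n i α = 𝟙 (X n)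
  ds_gt : ∀ (n i j : ℕ) (α : Bool), 1 ≤ j → j < i → i ≤ n + 2 →
    s (n + 1) j ≫ d (n + 1) i α = d n (i - 1) α ≫ s n j

/-- A cubical object with connections. -/
structure CubConn (C : Type u) [Category.{v} C] extends Pseudocub C where
  ss : ∀ (n i j : ℕ), 1 ≤ i → i ≤ j → j ≤ n + 1 →
    s n j ≫ s (n + 1) i = s n i ≫ s (n + 1) (j + 1)
  conn : ∀ n : ℕ, ℕ → (X (n + 1) ⟶ X (n + 2))
  cc : ∀ (n i j : ℕ), 1 ≤ i → i ≤ j → j ≤ n + 1 →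
    conn n j ≫ conn (n + 1) i = conn n i ≫ conn (n + 1) (j + 1)
  cs_lt : ∀ (n i j : ℕ), 1 ≤ i → i < j → j ≤ n + 2 →
    s (n + 1) j ≫ conn (n + 1) i = conn n i ≫ s (n + 2) (j + 1)
  cs_eq : ∀ (n i : ℕ), 1 ≤ i → i ≤ n + 2 →
    s (n + 1) i ≫ conn (n + 1) i = s (n + 1) i ≫ s (n + 2) i
  cs_gt : ∀ (n i j : ℕ), 1 ≤ j → j < i → i ≤ n + 2 →
    s (n + 1) j ≫ conn (n + 1) i = conn n (i - 1) ≫ s (n + 2) j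
  dconn_lt : ∀ (n i j : ℕ) (α : Bool), 1 ≤ i → i < j → j ≤ n + 2 →
    conn (n + 1) j ≫ d (n + 2) i α = d (n + 1) i α ≫ conn n (j - 1)
  dconn_eq_zero : ∀ (n j : ℕ), 1 ≤ j → j ≤ n + 1 →
    conn n j ≫ d (n + 1) j false = 𝟙 (X (n + 1)) ∧
    conn n j ≫ d (n + 1) (j + 1) false = 𝟙 (X (n + 1))
  dconn_eq_one : ∀ (n j : ℕ), 1 ≤ j → j ≤ n + 1 →
    conn n j ≫ d (n + 1) j true = d n j true ≫ s n j ∧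
    conn n j ≫ d (n + 1) (j + 1) true = d n j true ≫ s n j
  dconn_gt : ∀ (n i j : ℕ) (α : Bool), 1 ≤ j → j + 1 < i → i ≤ n + 3 →
    conn (n + 1) j ≫ d (n + 2) i α = d (n + 1) (i - 1) α ≫ conn n j

/-- The subobject `F_n(X) ⊆ X_n`: `F_0 = F_1 = 0` and
`F_n = Γ_1(N_{n-1}(X)) + ⋯ + Γ_{n-1}(N_{n-1}(X))` for `n ≥ 2`. -/
noncomputable def FSub {C : Type u} [Category.{v} C] [Abelian C] (X : CubConn C) :
    ∀ n, Subobject (X.X n)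
  | 0 => ⊥
  | 1 => ⊥
  | (n + 2) => (Finset.Icc 1 (n + 1)).sup fun j =>
      imageSubobject ((NSub X.toPrecub (n + 1)).arrow ≫ X.conn n j)


/-- Data exhibiting `K` as the normalized chain complex `N(X)` of a precubical object `X`
in an abelian category. -/
structure NormalizedData {C : Type u} [Category.{v} C] [Abelian C] (X : Precub C) where
  K : ChainComplex C ℕ
  ι : ∀ n, K.X n ⟶ X.X n
  ι_mono : ∀ n, Mono (ι n)
  ι_ker : ∀ (n i : ℕ), 1 ≤ i → i ≤ n + 1 → ι (n + 1) ≫ X.d n i true = 0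
  ι_lift : ∀ (n : ℕ) {W : C} (g : W ⟶ X.X (n + 1)),
    (∀ i, 1 ≤ i → i ≤ n + 1 → g ≫ X.d n i true = 0) →
    ∃ l : W ⟶ K.X (n + 1), l ≫ ι (n + 1) = g
  ι_lift₀ : ∀ {W : C} (g : W ⟶ X.X 0), ∃ l : W ⟶ K.X 0, l ≫ ι 0 = g
  diff : ∀ n : ℕ, K.d (n + 1) n ≫ ι n =
    ι (n + 1) ≫ ∑ i ∈ Finset.Icc 1 (n + 1), ((-1 : ℤ) ^ (i + 1)) • X.d n i false

section Aux

variable {C : Type u} [Category.{v} C] [Abelian C]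

/-- Factoring through a pullback subobject. -/
theorem pullback_factors_iff {W X Y : C} (f : X ⟶ Y) (P : Subobject Y) (g : W ⟶ X) :
    ((Subobject.pullback f).obj P).Factors g ↔ P.Factors (g ≫ f) := by
  induction P using Subobject.ind with
  | h p =>
    have e : (Subobject.pullback f).obj (Subobject.mk p) =
        Subobject.mk (pullback.snd p f) := rfl
    rw [e, Subobject.mk_factors_iff, Subobject.mk_factors_iff]
    constructor
    · rintro ⟨e₁, he₁⟩
      refine ⟨e₁ ≫ pullback.fst p f, ?_⟩
      simp only [MonoOver.mk_arrow] at he₁ ⊢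
      rw [← he₁]; exact (Category.assoc _ _ _).trans ((congrArg (e₁ ≫ ·) (pullback.condition (f := p) (g := f))).trans (Category.assoc _ _ _).symm)
    · rintro ⟨e₁, he₁⟩
      exact ⟨pullback.lift e₁ g he₁, by simpa using pullback.lift_snd _ _ _⟩

variable (X : CubConn C)

/-- `Γ_j` at the level of `X`, guarded. -/
noncomputable def XGam : ∀ (n : ℕ), ℕ → (X.X n ⟶ X.X (n+1))
  | 0, _ => 0
  | (m+1), j => if 1 ≤ j ∧ j ≤ m + 1 then X.conn m j else 0

/-- `∂_j^0` at the level of `X`, guarded. -/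
noncomputable def XDr (n j : ℕ) : X.X (n+1) ⟶ X.X n :=
  if 1 ≤ j ∧ j ≤ n + 1 then X.d n j false else 0

variable (ND : NormalizedData X.toPrecub)

theorem conn_lift_cond (m j : ℕ) (h1 : 1 ≤ j) (h2 : j ≤ m + 1) :
    ∀ i, 1 ≤ i → i ≤ m + 2 → (ND.ι (m+1) ≫ X.conn m j) ≫ X.d (m+1) i true = 0 := by
  intro i hi1 hi2
  rcases lt_trichotomy i j with hij | hij | hij
  · -- i < j, so j ≥ 2, m ≥ 1
    obtain ⟨m', rfl⟩ : ∃ m', m = m' + 1 := ⟨m - 1, by omega⟩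
    rw [Category.assoc, X.dconn_lt m' i j true hi1 hij (by omega), ← Category.assoc,
      ND.ι_ker (m'+1) i hi1 (by omega), zero_comp]
  · subst hij
    rw [Category.assoc, (X.dconn_eq_one m i hi1 h2).1, ← Category.assoc,
      ND.ι_ker m i hi1 h2, zero_comp]
  · rcases Nat.eq_or_lt_of_le hij with hij' | hij'
    · subst hij'
      rw [Category.assoc, (X.dconn_eq_one m j h1 h2).2, ← Category.assoc,
        ND.ι_ker m j h1 h2, zero_comp]
    · obtain ⟨m', rfl⟩ : ∃ m', m = m' + 1 := ⟨m - 1, by omega⟩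
      rw [Category.assoc, X.dconn_gt m' i j true h1 hij' (by omega), ← Category.assoc,
        ND.ι_ker (m'+1) (i-1) (by omega) (by omega), zero_comp]

theorem face_lift_cond (m j : ℕ) (h1 : 1 ≤ j) (h2 : j ≤ m + 2) :
    ∀ i, 1 ≤ i → i ≤ m + 1 → (ND.ι (m+2) ≫ X.d (m+1) j false) ≫ X.d m i true = 0 := by
  intro i hi1 hi2
  rcases Nat.lt_or_ge i j with hij | hij
  · rw [Category.assoc, X.dd m i j true false hi1 hij h2, ← Category.assoc,
      ND.ι_ker (m+1) i hi1 (by omega), zero_comp]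
  · have h' := X.dd m j (i+1) false true h1 (by omega) (by omega)
    simp only [Nat.add_sub_cancel] at h'
    rw [Category.assoc, ← h', ← Category.assoc, ND.ι_ker (m+1) (i+1) (by omega) (by omega),
      zero_comp]

/-- `Γ_j` lifted to the normalized complex. -/
noncomputable def Gam : ∀ (n : ℕ), ℕ → (ND.K.X n ⟶ ND.K.X (n+1))
  | 0, _ => 0
  | (m+1), j =>
    if h : 1 ≤ j ∧ j ≤ m + 1 then
      (ND.ι_lift (m+1) (ND.ι (m+1) ≫ X.conn m j) (conn_lift_cond X ND m j h.1 h.2)).choose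
    else 0

/-- `∂_j^0` lifted to the normalized complex. -/
noncomputable def Dr : ∀ (n : ℕ), ℕ → (ND.K.X (n+1) ⟶ ND.K.X n)
  | 0, j => if j = 1 then (ND.ι_lift₀ (ND.ι 1 ≫ X.d 0 1 false)).choose else 0
  | (m+1), j =>
    if h : 1 ≤ j ∧ j ≤ m + 2 then
      (ND.ι_lift m (ND.ι (m+2) ≫ X.d (m+1) j false)
        (face_lift_cond X ND m j h.1 h.2)).choose
    else 0

theorem Gam_ι' (n j : ℕ) : Gam X ND n j ≫ ND.ι (n+1) = ND.ι n ≫ XGam X n j := by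
  match n with
  | 0 => simp [Gam, XGam]
  | (m+1) =>
    by_cases h : 1 ≤ j ∧ j ≤ m + 1
    · rw [Gam, dif_pos h,
        (ND.ι_lift (m+1) (ND.ι (m+1) ≫ X.conn m j) (conn_lift_cond X ND m j h.1 h.2)).choose_spec,
        XGam, if_pos h]
    · rw [Gam, dif_neg h, XGam, if_neg h, comp_zero, zero_comp]

theorem Dr_ι' (n j : ℕ) : Dr X ND n j ≫ ND.ι n = ND.ι (n+1) ≫ XDr X n j := by
  match n with
  | 0 =>
    by_cases h : j = 1
    · subst h
      rw [Dr, if_pos rfl, (ND.ι_lift₀ (ND.ι 1 ≫ X.d 0 1 false)).choose_spec, XDr,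
        if_pos (by omega)]
    · rw [Dr, if_neg h, XDr, if_neg (by omega), comp_zero, zero_comp]
  | (m+1) =>
    by_cases h : 1 ≤ j ∧ j ≤ m + 2
    · rw [Dr, dif_pos h,
        (ND.ι_lift m (ND.ι (m+2) ≫ X.d (m+1) j false)
          (face_lift_cond X ND m j h.1 h.2)).choose_spec, XDr, if_pos h]
    · rw [Dr, dif_neg h, XDr, if_neg h, comp_zero, zero_comp]

theorem Gam_ι (m j : ℕ) (h1 : 1 ≤ j) (h2 : j ≤ m + 1) :
    Gam X ND (m+1) j ≫ ND.ι (m+2) = ND.ι (m+1) ≫ X.conn m j := by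
  rw [Gam_ι', XGam, if_pos ⟨h1, h2⟩]

theorem Dr_ι (n j : ℕ) (h1 : 1 ≤ j) (h2 : j ≤ n + 1) :
    Dr X ND n j ≫ ND.ι n = ND.ι (n+1) ≫ X.d n j false := by
  rw [Dr_ι', XDr, if_pos ⟨h1, h2⟩]

theorem Gam_zero (n j : ℕ) (h : j = 0 ∨ n < j) : Gam X ND n j = 0 := by
  match n with
  | 0 => rfl
  | (m+1) => rw [Gam, dif_neg (by omega)]

theorem Dr_zero (n j : ℕ) (h : j = 0 ∨ n + 1 < j) : Dr X ND n j = 0 := by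
  match n with
  | 0 => rw [Dr, if_neg (by omega)]
  | (m+1) => rw [Dr, dif_neg (by omega)]

end Aux
section Aux2

variable {C : Type u} [Category.{v} C] [Abelian C] (X : CubConn C)
variable (ND : NormalizedData X.toPrecub)

theorem Kd_eq (n : ℕ) : ND.K.d (n+1) n = ∑ i ∈ Finset.Icc 1 (n+1),
    ((-1:ℤ)^(i+1)) • Dr X ND n i := by
  haveI := ND.ι_mono n
  rw [← cancel_mono (ND.ι n), ND.diff n, Preadditive.sum_comp, Preadditive.comp_sum]
  refine Finset.sum_congr rfl fun i hi => ?_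
  obtain ⟨hi1, hi2⟩ := Finset.mem_Icc.mp hi
  rw [Preadditive.zsmul_comp, Preadditive.comp_zsmul, Dr_ι X ND n i hi1 hi2]

theorem GamDr_lt (n J i : ℕ) (h1 : 1 ≤ i) (h2 : i < J) (h3 : J ≤ n + 1) :
    Gam X ND (n+1) J ≫ Dr X ND (n+1) i = Dr X ND n i ≫ Gam X ND n (J-1) := by
  obtain ⟨n, rfl⟩ : ∃ n', n = n' + 1 := ⟨n - 1, by omega⟩
  haveI := ND.ι_mono (n+2)
  rw [← cancel_mono (ND.ι (n+2))]
  conv_lhs => rw [Category.assoc, Dr_ι X ND (n+2) i h1 (by omega), ← Category.assoc,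
    Gam_ι X ND (n+1) J (by omega) h3, Category.assoc,
    X.dconn_lt n i J false h1 h2 (by omega)]
  conv_rhs => rw [Category.assoc, Gam_ι X ND n (J-1) (by omega) (by omega),
    ← Category.assoc, Dr_ι X ND (n+1) i h1 (by omega), Category.assoc]

theorem GamDr_eq₁ (n J : ℕ) (h1 : 1 ≤ J) (h2 : J ≤ n + 1) :
    Gam X ND (n+1) J ≫ Dr X ND (n+1) J = 𝟙 _ := by
  haveI := ND.ι_mono (n+1)
  rw [← cancel_mono (ND.ι (n+1)), Category.id_comp]
  conv_lhs => rw [Category.assoc, Dr_ι X ND (n+1) J h1 (by omega), ← Category.assoc,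
    Gam_ι X ND n J h1 h2, Category.assoc, (X.dconn_eq_zero n J h1 h2).1, Category.comp_id]

theorem GamDr_eq₂ (n J : ℕ) (h1 : 1 ≤ J) (h2 : J ≤ n + 1) :
    Gam X ND (n+1) J ≫ Dr X ND (n+1) (J+1) = 𝟙 _ := by
  haveI := ND.ι_mono (n+1)
  rw [← cancel_mono (ND.ι (n+1)), Category.id_comp]
  conv_lhs => rw [Category.assoc, Dr_ι X ND (n+1) (J+1) (by omega) (by omega),
    ← Category.assoc, Gam_ι X ND n J h1 h2, Category.assoc,
    (X.dconn_eq_zero n J h1 h2).2, Category.comp_id]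

theorem GamDr_gt (n J i : ℕ) (h1 : 1 ≤ J) (h1' : J ≤ n + 1) (h2 : J + 1 < i)
    (h3 : i ≤ n + 2) :
    Gam X ND (n+1) J ≫ Dr X ND (n+1) i = Dr X ND n (i-1) ≫ Gam X ND n J := by
  obtain ⟨n, rfl⟩ : ∃ n', n = n' + 1 := ⟨n - 1, by omega⟩
  haveI := ND.ι_mono (n+2)
  rw [← cancel_mono (ND.ι (n+2))]
  conv_lhs => rw [Category.assoc, Dr_ι X ND (n+2) i (by omega) (by omega), ← Category.assoc,
    Gam_ι X ND (n+1) J h1 (by omega), Category.assoc,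
    X.dconn_gt n i J false h1 h2 (by omega)]
  conv_rhs => rw [Category.assoc, Gam_ι X ND n J h1 (by omega),
    ← Category.assoc, Dr_ι X ND (n+1) (i-1) (by omega) (by omega), Category.assoc]

theorem GamGam (n i j : ℕ) (h1 : 1 ≤ i) (h2 : i ≤ j) (h3 : j ≤ n + 1) :
    Gam X ND (n+1) j ≫ Gam X ND (n+2) i = Gam X ND (n+1) i ≫ Gam X ND (n+2) (j+1) := by
  haveI := ND.ι_mono (n+3)
  rw [← cancel_mono (ND.ι (n+3))]
  conv_lhs => rw [Category.assoc, Gam_ι X ND (n+1) i h1 (by omega), ← Category.assoc,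
    Gam_ι X ND n j (by omega) h3, Category.assoc, X.cc n i j h1 h2 h3]
  conv_rhs => rw [Category.assoc, Gam_ι X ND (n+1) (j+1) (by omega) (by omega),
    ← Category.assoc, Gam_ι X ND n i h1 (by omega), Category.assoc]

theorem DrDr (n i k : ℕ) (h1 : 1 ≤ i) (h2 : i < k) (h3 : k ≤ n + 2) :
    Dr X ND (n+1) k ≫ Dr X ND n i = Dr X ND (n+1) i ≫ Dr X ND n (k-1) := by
  haveI := ND.ι_mono n
  rw [← cancel_mono (ND.ι n)]
  conv_lhs => rw [Category.assoc, Dr_ι X ND n i h1 (by omega), ← Category.assoc,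
    Dr_ι X ND (n+1) k (by omega) h3, Category.assoc, X.dd n i k false false h1 h2 h3]
  conv_rhs => rw [Category.assoc, Dr_ι X ND n (k-1) (by omega) (by omega),
    ← Category.assoc, Dr_ι X ND (n+1) i h1 (by omega), Category.assoc]

end Aux2
section Aux3

variable {C : Type u} [Category.{v} C] [Abelian C] (X : CubConn C)
variable (ND : NormalizedData X.toPrecub)

/-- The operator `1 - Γ_j ∂_j^0` on the normalized complex. -/
noncomputable def FStep : ∀ (n : ℕ), ℕ → (ND.K.X n ⟶ ND.K.X n)
  | 0, _ => 𝟙 _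
  | (m+1), j => 𝟙 _ - Dr X ND m j ≫ Gam X ND m j

theorem FStep_id (n j : ℕ) (h : j = 0 ∨ n ≤ j) : FStep X ND n j = 𝟙 _ := by
  match n with
  | 0 => rfl
  | (m+1) =>
    rw [FStep, Gam_zero X ND m j (by omega), comp_zero, sub_zero]

/-- `phi n j` is the composite `(1 - Γ_j ∂_j^0) ∘ ⋯ ∘ (1 - Γ_1 ∂_1^0)`. -/
noncomputable def phi : ∀ (n : ℕ), ℕ → (ND.K.X n ⟶ ND.K.X n)
  | _, 0 => 𝟙 _
  | n, (j+1) => phi n j ≫ FStep X ND n (j+1)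

theorem phi_stable (n j k : ℕ) (h : n ≤ j) (h' : j ≤ k) : phi X ND n k = phi X ND n j := by
  induction k with
  | zero =>
    obtain rfl : j = 0 := by omega
    rfl
  | succ k ih =>
    rcases Nat.eq_or_lt_of_le h' with h'' | h''
    · rw [h'']
    · rw [phi, ih (by omega), FStep_id X ND n (k+1) (by omega), Category.comp_id]

theorem FStep_Dr (n k i : ℕ) (h1 : 1 ≤ i) (h2 : i < k) :
    FStep X ND (n+1) k ≫ Dr X ND n i = Dr X ND n i ≫ FStep X ND n (k-1) := by
  rcases Nat.lt_or_ge n k with hk | hk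
  · rw [FStep_id X ND (n+1) k (by omega), FStep_id X ND n (k-1) (by omega),
      Category.id_comp, Category.comp_id]
  · -- 1 ≤ i < k ≤ n
    obtain ⟨n, rfl⟩ : ∃ n', n = n' + 1 := ⟨n - 1, by omega⟩
    rw [FStep, Preadditive.sub_comp, Category.id_comp, Category.assoc,
      GamDr_lt X ND n k i h1 h2 (by omega)]
    obtain ⟨k, rfl⟩ : ∃ k', k = k' + 1 := ⟨k - 1, by omega⟩
    simp only [Nat.add_sub_cancel]
    rw [← Category.assoc, DrDr X ND n i (k+1) h1 h2 (by omega)]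
    simp only [Nat.add_sub_cancel]
    rw [FStep, Preadditive.comp_sub, Category.comp_id, Category.assoc]

theorem FStep_Dr_kill (n i : ℕ) (h1 : 1 ≤ i) (h2 : i ≤ n) :
    FStep X ND (n+1) i ≫ Dr X ND n i = 0 := by
  obtain ⟨n, rfl⟩ : ∃ n', n = n' + 1 := ⟨n - 1, by omega⟩
  rw [FStep, Preadditive.sub_comp, Category.id_comp, Category.assoc,
    GamDr_eq₁ X ND n i h1 (by omega), Category.comp_id, sub_self]

theorem phi_Dr (n j i : ℕ) (h1 : 1 ≤ i) (h2 : i ≤ j) (h3 : i ≤ n) :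
    phi X ND (n+1) j ≫ Dr X ND n i = 0 := by
  induction j with
  | zero => omega
  | succ j ih =>
    rcases Nat.eq_or_lt_of_le h2 with h | h
    · subst h
      rw [phi, Category.assoc, FStep_Dr_kill X ND n (j+1) h1 h3, comp_zero]
    · rw [phi, Category.assoc, FStep_Dr X ND n (j+1) i h1 (by omega), ← Category.assoc,
        ih (by omega), zero_comp]

theorem Gam_FStep (n J k : ℕ) (h1 : 1 ≤ k) (h2 : k < J) :
    Gam X ND n J ≫ FStep X ND (n+1) k = FStep X ND n k ≫ Gam X ND n J := by
  rcases Nat.lt_or_ge n J with hJ | hJ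
  · rw [Gam_zero X ND n J (by omega), zero_comp, comp_zero]
  · -- 1 ≤ k < J ≤ n, so n ≥ 2
    obtain ⟨n, rfl⟩ : ∃ n', n = n' + 2 := ⟨n - 2, by omega⟩
    rw [FStep, FStep, Preadditive.comp_sub, Preadditive.sub_comp, Category.comp_id,
      Category.id_comp]
    congr 1
    conv_lhs => rw [← Category.assoc, GamDr_lt X ND (n+1) J k h1 h2 (by omega),
      Category.assoc]
    conv_rhs => rw [Category.assoc]
    have hgg := GamGam X ND n k (J-1) h1 (by omega) (by omega)
    have hJ' : J - 1 + 1 = J := by omega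
    rw [hJ'] at hgg
    rw [hgg]

theorem Gam_FStep_kill (n J : ℕ) (h1 : 1 ≤ J) (h2 : J ≤ n) :
    Gam X ND n J ≫ FStep X ND (n+1) J = 0 := by
  obtain ⟨n, rfl⟩ : ∃ n', n = n' + 1 := ⟨n - 1, by omega⟩
  rw [FStep, Preadditive.comp_sub, Category.comp_id, ← Category.assoc,
    GamDr_eq₁ X ND n J h1 h2, Category.id_comp, sub_self]

theorem Gam_phi_comm (n J j : ℕ) (h1 : 1 ≤ J) (h2 : j < J) :
    Gam X ND n J ≫ phi X ND (n+1) j = phi X ND n j ≫ Gam X ND n J := by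
  induction j with
  | zero => rw [phi, phi, Category.comp_id, Category.id_comp]
  | succ j ih =>
    rw [phi, phi, ← Category.assoc, ih (by omega), Category.assoc,
      Gam_FStep X ND n J (j+1) (by omega) h2, ← Category.assoc]

theorem Gam_phi_kill (n J j : ℕ) (h1 : 1 ≤ J) (h2 : J ≤ n) (h3 : J ≤ j) :
    Gam X ND n J ≫ phi X ND (n+1) j = 0 := by
  induction j with
  | zero => omega
  | succ j ih =>
    rcases Nat.eq_or_lt_of_le h3 with h | h
    · subst h
      rw [phi, ← Category.assoc, Gam_phi_comm X ND n (j+1) j h1 (by omega),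
        Category.assoc, Gam_FStep_kill X ND n (j+1) h1 h2, comp_zero]
    · rw [phi, ← Category.assoc, ih (by omega), zero_comp]

end Aux3
section Aux4

variable {C : Type u} [Category.{v} C] [Abelian C] (X : CubConn C)
variable (ND : NormalizedData X.toPrecub)

theorem gamkey (m J : ℕ) (h1 : 1 ≤ J) (h2 : J ≤ m + 1) :
    Gam X ND (m+1) J ≫ ND.K.d (m+2) (m+1) + ND.K.d (m+1) m ≫ Gam X ND m J
    = ((-1:ℤ)^(J+1)) • (Dr X ND m J ≫ Gam X ND m J)
      + ∑ i ∈ Finset.Icc 1 (J-1),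
          ((-1:ℤ)^(i+1)) • (Dr X ND m i ≫ (Gam X ND m (J-1) + Gam X ND m J)) := by
  have sgn : ∀ k : ℕ, ((-1:ℤ))^(k+2) = (-1:ℤ)^k := fun k => by
    rw [pow_add]; norm_num
  rw [Kd_eq X ND (m+1), Kd_eq X ND m, Preadditive.comp_sum, Preadditive.sum_comp]
  simp only [Preadditive.comp_zsmul, Preadditive.zsmul_comp]
  -- split the first sum
  have e1 : Finset.Icc 1 (m+2) =
      Finset.Icc 1 (J-1) ∪ insert J (insert (J+1) (Finset.Icc (J+2) (m+2))) := by
    ext x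
    simp only [Finset.mem_Icc, Finset.mem_union, Finset.mem_insert]
    omega
  have d1 : Disjoint (Finset.Icc 1 (J-1))
      (insert J (insert (J+1) (Finset.Icc (J+2) (m+2)))) := by
    simp only [Finset.disjoint_left, Finset.mem_Icc, Finset.mem_insert]
    omega
  rw [e1, Finset.sum_union d1,
    Finset.sum_insert (by simp only [Finset.mem_insert, Finset.mem_Icc]; omega),
    Finset.sum_insert (by simp only [Finset.mem_Icc]; omega)]
  -- split the second sum
  have e2 : Finset.Icc 1 (m+1) =
      Finset.Icc 1 (J-1) ∪ insert J (Finset.Icc (J+1) (m+1)) := by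
    ext x
    simp only [Finset.mem_Icc, Finset.mem_union, Finset.mem_insert]
    omega
  have d2 : Disjoint (Finset.Icc 1 (J-1)) (insert J (Finset.Icc (J+1) (m+1))) := by
    simp only [Finset.disjoint_left, Finset.mem_Icc, Finset.mem_insert]
    omega
  rw [e2, Finset.sum_union d2, Finset.sum_insert (by simp only [Finset.mem_Icc]; omega)]
  -- rewrite the pieces
  have p1 : ∑ i ∈ Finset.Icc 1 (J-1), ((-1:ℤ)^(i+1)) •
      (Gam X ND (m+1) J ≫ Dr X ND (m+1) i)
      = ∑ i ∈ Finset.Icc 1 (J-1), ((-1:ℤ)^(i+1)) • (Dr X ND m i ≫ Gam X ND m (J-1)) := by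
    refine Finset.sum_congr rfl fun i hi => ?_
    obtain ⟨hi1, hi2⟩ := Finset.mem_Icc.mp hi
    rw [GamDr_lt X ND m J i hi1 (by omega) h2]
  have pJ : Gam X ND (m+1) J ≫ Dr X ND (m+1) J = 𝟙 _ := GamDr_eq₁ X ND m J h1 h2
  have pJ1 : Gam X ND (m+1) J ≫ Dr X ND (m+1) (J+1) = 𝟙 _ := GamDr_eq₂ X ND m J h1 h2
  have p4 : ∑ i ∈ Finset.Icc (J+2) (m+2), ((-1:ℤ)^(i+1)) •
      (Gam X ND (m+1) J ≫ Dr X ND (m+1) i)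
      = ∑ k ∈ Finset.Icc (J+1) (m+1), ((-1:ℤ)^k) • (Dr X ND m k ≫ Gam X ND m J) := by
    have emap : Finset.Icc (J+2) (m+2) =
        (Finset.Icc (J+1) (m+1)).map (addRightEmbedding 1) := by
      rw [Finset.map_add_right_Icc]
    rw [emap, Finset.sum_map]
    refine Finset.sum_congr rfl fun k hk => ?_
    obtain ⟨hk1, hk2⟩ := Finset.mem_Icc.mp hk
    have : addRightEmbedding 1 k = k + 1 := rfl
    rw [this, GamDr_gt X ND m J (k+1) h1 h2 (by omega) (by omega)]
    have : k + 1 - 1 = k := by omega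
    rw [this, show k + 1 + 1 = k + 2 from rfl, sgn k]
  rw [p1, pJ, pJ1, p4]
  have hq : ((-1:ℤ)^(J+1+1)) • (𝟙 (ND.K.X (m+1))) = -(((-1:ℤ)^(J+1)) • (𝟙 (ND.K.X (m+1)))) := by
    have : ((-1:ℤ))^(J+1+1) = -((-1:ℤ))^(J+1) := by rw [pow_succ]; ring
    rw [this, neg_smul]
  rw [hq]
  have hmerge : ∑ i ∈ Finset.Icc 1 (J-1), ((-1:ℤ)^(i+1)) • (Dr X ND m i ≫ Gam X ND m (J-1))
      + ∑ i ∈ Finset.Icc 1 (J-1), ((-1:ℤ)^(i+1)) • (Dr X ND m i ≫ Gam X ND m J)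
      = ∑ i ∈ Finset.Icc 1 (J-1), ((-1:ℤ)^(i+1)) •
          (Dr X ND m i ≫ (Gam X ND m (J-1) + Gam X ND m J)) := by
    rw [← Finset.sum_add_distrib]
    refine Finset.sum_congr rfl fun i hi => ?_
    rw [Preadditive.comp_add, smul_add]
  have hneg : ∑ k ∈ Finset.Icc (J+1) (m+1), ((-1:ℤ)^k) • (Dr X ND m k ≫ Gam X ND m J)
      = - ∑ k ∈ Finset.Icc (J+1) (m+1), ((-1:ℤ)^(k+1)) • (Dr X ND m k ≫ Gam X ND m J) := by
    rw [← Finset.sum_neg_distrib]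
    refine Finset.sum_congr rfl fun k hk => ?_
    rw [pow_succ, ← neg_smul]
    ring_nf
  rw [hneg]
  rw [← hmerge]
  abel
end Aux4
section Aux5

variable {C : Type u} [Category.{v} C] [Abelian C] (X : CubConn C)
variable (ND : NormalizedData X.toPrecub)

/-- Partial homotopy operator. -/
noncomputable def HP (n j : ℕ) : ND.K.X n ⟶ ND.K.X (n+1) :=
  ∑ k ∈ Finset.Icc 1 j, ((-1:ℤ)^k) • (phi X ND n (k-1) ≫ Gam X ND n k)

theorem HP_zero (n : ℕ) : HP X ND n 0 = 0 := by
  rw [HP]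
  simp

theorem HP_level_zero (j : ℕ) : HP X ND 0 j = 0 := by
  rw [HP]
  refine Finset.sum_eq_zero fun k hk => ?_
  rw [Gam_zero X ND 0 k (by obtain ⟨h1, _⟩ := Finset.mem_Icc.mp hk; omega), comp_zero,
    smul_zero]

theorem HP_succ (n j : ℕ) : HP X ND n (j+1) =
    HP X ND n j + ((-1:ℤ)^(j+1)) • (phi X ND n j ≫ Gam X ND n (j+1)) := by
  rw [HP, HP, Finset.sum_Icc_succ_top (by omega : 1 ≤ j + 1)]
  norm_num

theorem phi_level_zero (j : ℕ) : phi X ND 0 j = 𝟙 _ := by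
  induction j with
  | zero => rfl
  | succ j ih => rw [phi, ih, FStep_id X ND 0 (j+1) (by omega), Category.comp_id]

theorem tstep (j n : ℕ)
    (cm : ND.K.d (n+1) n ≫ phi X ND n j = phi X ND (n+1) j ≫ ND.K.d (n+1) n) :
    (((-1:ℤ)^(j+1)) • (phi X ND (n+1) j ≫ Gam X ND (n+1) (j+1))) ≫ ND.K.d (n+2) (n+1)
    + ND.K.d (n+1) n ≫ (((-1:ℤ)^(j+1)) • (phi X ND n j ≫ Gam X ND n (j+1)))
    = phi X ND (n+1) (j+1) - phi X ND (n+1) j := by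
  rcases Nat.lt_or_ge (n+1) (j+1) with hbig | hle
  · rw [Gam_zero X ND (n+1) (j+1) (by omega), Gam_zero X ND n (j+1) (by omega),
      comp_zero, smul_zero, zero_comp, comp_zero, smul_zero, comp_zero, add_zero,
      phi, FStep_id X ND (n+1) (j+1) (by omega), Category.comp_id, sub_self]
  · have hkey := gamkey X ND n (j+1) (by omega) hle
    rw [Preadditive.zsmul_comp, Preadditive.comp_zsmul,
      Category.assoc (phi X ND (n+1) j) (Gam X ND (n+1) (j+1)) (ND.K.d (n+2) (n+1)),
      ← Category.assoc (ND.K.d (n+1) n) (phi X ND n j) (Gam X ND n (j+1)), cm,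
      Category.assoc (phi X ND (n+1) j) (ND.K.d (n+1) n) (Gam X ND n (j+1)),
      ← smul_add, ← Preadditive.comp_add, hkey]
    have hj : j + 1 - 1 = j := by omega
    rw [hj, Preadditive.comp_add, Preadditive.comp_sum, smul_add]
    have hz : ∑ i ∈ Finset.Icc 1 j, phi X ND (n+1) j ≫
        (((-1:ℤ)^(i+1)) • (Dr X ND n i ≫ (Gam X ND n j + Gam X ND n (j+1)))) = 0 := by
      refine Finset.sum_eq_zero fun i hi => ?_
      obtain ⟨hi1, hi2⟩ := Finset.mem_Icc.mp hi
      rw [Preadditive.comp_zsmul, ← Category.assoc,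
        phi_Dr X ND n j i hi1 hi2 (by omega), zero_comp, smul_zero]
    rw [hz, smul_zero, add_zero, Preadditive.comp_zsmul, smul_smul]
    have hsgn : ((-1:ℤ)^(j+1)) * ((-1:ℤ)^(j+1+1)) = -1 := by
      rw [← pow_add]
      have h2 : j + 1 + (j + 1 + 1) = 2 * (j + 1) + 1 := by omega
      rw [h2, pow_succ, pow_mul]
      norm_num
    rw [hsgn, neg_one_zsmul]
    conv_rhs => rw [phi, FStep, Preadditive.comp_sub, Category.comp_id]
    abel

theorem Tlem (j : ℕ) : ∀ n, HP X ND (n+1) j ≫ ND.K.d (n+2) (n+1)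
    + ND.K.d (n+1) n ≫ HP X ND n j = phi X ND (n+1) j - 𝟙 _ := by
  induction j with
  | zero =>
    intro n
    rw [HP_zero, HP_zero, zero_comp, comp_zero, add_zero, phi, sub_self]
  | succ j ih =>
    have hphi : ∀ n, phi X ND (n+1) j =
        (HP X ND (n+1) j ≫ ND.K.d (n+2) (n+1) + ND.K.d (n+1) n ≫ HP X ND n j) + 𝟙 _ := by
      intro n
      rw [ih n, sub_add_cancel]
    have cm : ∀ n, ND.K.d (n+1) n ≫ phi X ND n j = phi X ND (n+1) j ≫ ND.K.d (n+1) n := by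
      intro n
      match n with
      | 0 =>
        rw [phi_level_zero, Category.comp_id, hphi 0, HP_level_zero, comp_zero, add_zero]
        simp only [Preadditive.add_comp, Preadditive.comp_add, Category.id_comp,
          Category.comp_id, Category.assoc, HomologicalComplex.d_comp_d,
          HomologicalComplex.d_comp_d_assoc, zero_comp, comp_zero, zero_add, add_zero]
      | (m+1) =>
        rw [hphi m, hphi (m+1)]
        simp only [Preadditive.add_comp, Preadditive.comp_add, Category.id_comp,
          Category.comp_id, Category.assoc, HomologicalComplex.d_comp_d,
          HomologicalComplex.d_comp_d_assoc, zero_comp, comp_zero, zero_add, add_zero]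
    intro n
    rw [HP_succ X ND (n+1) j, HP_succ X ND n j, Preadditive.add_comp, Preadditive.comp_add]
    calc HP X ND (n+1) j ≫ ND.K.d (n+2) (n+1)
          + (((-1:ℤ)^(j+1)) • (phi X ND (n+1) j ≫ Gam X ND (n+1) (j+1))) ≫ ND.K.d (n+2) (n+1)
          + (ND.K.d (n+1) n ≫ HP X ND n j
            + ND.K.d (n+1) n ≫ (((-1:ℤ)^(j+1)) • (phi X ND n j ≫ Gam X ND n (j+1))))
        = (HP X ND (n+1) j ≫ ND.K.d (n+2) (n+1) + ND.K.d (n+1) n ≫ HP X ND n j)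
          + ((((-1:ℤ)^(j+1)) • (phi X ND (n+1) j ≫ Gam X ND (n+1) (j+1))) ≫ ND.K.d (n+2) (n+1)
            + ND.K.d (n+1) n ≫ (((-1:ℤ)^(j+1)) • (phi X ND n j ≫ Gam X ND n (j+1)))) := by
          abel
      _ = (phi X ND (n+1) j - 𝟙 _) + (phi X ND (n+1) (j+1) - phi X ND (n+1) j) := by
          rw [ih n, tstep X ND j n (cm n)]
      _ = phi X ND (n+1) (j+1) - 𝟙 _ := by abel

/-- The degree-`n` component of the chain map `f` homotopic to the identity. -/
noncomputable def fmap (n : ℕ) : ND.K.X n ⟶ ND.K.X n := phi X ND n n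

/-- The homotopy operator. -/
noncomputable def Hmap (n : ℕ) : ND.K.X n ⟶ ND.K.X (n+1) := HP X ND n n

theorem main_homotopy (n : ℕ) :
    Hmap X ND (n+1) ≫ ND.K.d (n+2) (n+1) + ND.K.d (n+1) n ≫ Hmap X ND n
    = fmap X ND (n+1) - 𝟙 _ := by
  have h := Tlem X ND (n+1) n
  rw [Hmap, Hmap, fmap]
  have hHP : HP X ND n (n+1) = HP X ND n n := by
    rw [HP_succ, Gam_zero X ND n (n+1) (by omega), comp_zero, smul_zero, add_zero]
  rw [hHP] at h
  exact h

theorem fmap_zero : fmap X ND 0 = 𝟙 _ := phi_level_zero X ND 0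

theorem Hmap_zero : Hmap X ND 0 = 0 := HP_zero X ND 0

theorem fmap_comm (n : ℕ) :
    ND.K.d (n+1) n ≫ fmap X ND n = fmap X ND (n+1) ≫ ND.K.d (n+1) n := by
  match n with
  | 0 =>
    rw [fmap_zero, Category.comp_id]
    have h := main_homotopy X ND 0
    have : fmap X ND 1 = (Hmap X ND 1 ≫ ND.K.d 2 1 + ND.K.d 1 0 ≫ Hmap X ND 0) + 𝟙 _ := by
      rw [h, sub_add_cancel]
    rw [this, Hmap_zero, comp_zero, add_zero]
    simp only [Preadditive.add_comp, Preadditive.comp_add, Category.id_comp,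
      Category.comp_id, Category.assoc, HomologicalComplex.d_comp_d,
      HomologicalComplex.d_comp_d_assoc, zero_comp, comp_zero, zero_add, add_zero]
  | (m+1) =>
    have h1 : fmap X ND (m+1) = (Hmap X ND (m+1) ≫ ND.K.d (m+2) (m+1)
        + ND.K.d (m+1) m ≫ Hmap X ND m) + 𝟙 _ := by
      rw [main_homotopy X ND m, sub_add_cancel]
    have h2 : fmap X ND (m+2) = (Hmap X ND (m+2) ≫ ND.K.d (m+3) (m+2)
        + ND.K.d (m+2) (m+1) ≫ Hmap X ND (m+1)) + 𝟙 _ := by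
      rw [main_homotopy X ND (m+1), sub_add_cancel]
    rw [h1, h2]
    simp only [Preadditive.add_comp, Preadditive.comp_add, Category.id_comp,
      Category.comp_id, Category.assoc, HomologicalComplex.d_comp_d,
      HomologicalComplex.d_comp_d_assoc, zero_comp, comp_zero, zero_add, add_zero]

theorem Gam_fmap (n J : ℕ) (h1 : 1 ≤ J) (h2 : J ≤ n) :
    Gam X ND n J ≫ fmap X ND (n+1) = 0 :=
  Gam_phi_kill X ND n J (n+1) h1 h2 (by omega)

end Aux5
section Aux6

variable {C : Type u} [Category.{v} C] [Abelian C] (X : CubConn C)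

noncomputable def XFStep : ∀ (n : ℕ), ℕ → (X.X n ⟶ X.X n)
  | 0, _ => 𝟙 _
  | (m+1), j => 𝟙 _ - XDr X m j ≫ XGam X m j

noncomputable def XPhi : ∀ (n : ℕ), ℕ → (X.X n ⟶ X.X n)
  | _, 0 => 𝟙 _
  | n, (j+1) => XPhi n j ≫ XFStep X n (j+1)

variable (ND : NormalizedData X.toPrecub)

theorem FStep_ι (n j : ℕ) : FStep X ND n j ≫ ND.ι n = ND.ι n ≫ XFStep X n j := by
  match n with
  | 0 => rw [FStep, XFStep, Category.comp_id, Category.id_comp]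
  | (m+1) =>
    rw [FStep, XFStep, Preadditive.sub_comp, Preadditive.comp_sub, Category.comp_id,
      Category.id_comp]
    congr 1
    rw [Category.assoc, Gam_ι' X ND m j, ← Category.assoc, Dr_ι' X ND m j, Category.assoc]

theorem phi_ι (n j : ℕ) : phi X ND n j ≫ ND.ι n = ND.ι n ≫ XPhi X n j := by
  induction j with
  | zero => rw [phi, XPhi, Category.comp_id, Category.id_comp]
  | succ j ih =>
    rw [phi, XPhi, Category.assoc, FStep_ι X ND n (j+1), ← Category.assoc, ih,
      Category.assoc]

theorem fmap_ι (n : ℕ) : fmap X ND n ≫ ND.ι n = ND.ι n ≫ XPhi X n n := phi_ι X ND n n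

theorem NSub_arrow_d (m i : ℕ) (h1 : 1 ≤ i) (h2 : i ≤ m + 1) :
    (NSub X.toPrecub (m+1)).arrow ≫ X.d m i true = 0 := by
  have hle : NSub X.toPrecub (m+1) ≤ kernelSubobject (X.toPrecub.d m i true) :=
    Finset.inf_le (Finset.mem_Icc.mpr ⟨h1, h2⟩)
  rw [← Subobject.ofLE_arrow hle, Category.assoc, kernelSubobject_arrow_comp,
    comp_zero]

theorem ι_factors_NSub (m : ℕ) : (NSub X.toPrecub (m+1)).Factors (ND.ι (m+1)) := by
  refine (Subobject.finset_inf_factors _).mpr fun i hi => ?_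
  obtain ⟨h1, h2⟩ := Finset.mem_Icc.mp hi
  exact kernelSubobject_factors _ _ (ND.ι_ker m i h1 h2)

theorem FSub_arrow_XPhi (ND : NormalizedData X.toPrecub) (n : ℕ) : (FSub X n).arrow ≫ XPhi X n n = 0 := by
  match n with
  | 0 => rw [FSub, Subobject.bot_arrow, zero_comp]
  | 1 => rw [FSub, Subobject.bot_arrow, zero_comp]
  | (m+2) =>
    have hle : FSub X (m+2) ≤ kernelSubobject (XPhi X (m+2) (m+2)) := by
      refine Finset.sup_le fun j hj => ?_
      obtain ⟨h1, h2⟩ := Finset.mem_Icc.mp hj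
      have hw : ((NSub X.toPrecub (m+1)).arrow ≫ X.conn m j) ≫ XPhi X (m+2) (m+2) = 0 := by
        obtain ⟨v, hv⟩ := ND.ι_lift m ((NSub X.toPrecub (m+1)).arrow)
          (fun i hi1 hi2 => NSub_arrow_d X m i hi1 hi2)
        have hgam : (NSub X.toPrecub (m+1)).arrow ≫ X.conn m j
            = v ≫ Gam X ND (m+1) j ≫ ND.ι (m+2) := by
          rw [Gam_ι X ND m j h1 h2, ← Category.assoc, hv]
        rw [hgam, Category.assoc, Category.assoc, ← fmap_ι X ND (m+2),
          ← Category.assoc (Gam X ND (m+1) j) (fmap X ND (m+2)) (ND.ι (m+2)),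
          Gam_fmap X ND (m+1) j h1 h2, zero_comp, comp_zero]
      exact imageSubobject_le _ (factorThruKernelSubobject _ _ hw)
        (factorThruKernelSubobject_comp_arrow _ _ hw)
    rw [← Subobject.ofLE_arrow hle, Category.assoc, kernelSubobject_arrow_comp,
      comp_zero]

end Aux6
/-- The canonical projection `π : N(X) → N(X)/F(X)`: a degreewise epimorphism whose
kernel is `F(X)` (viewed inside `N(X)` via pullback along the inclusion `N(X) ↪ X`).
It is a chain homotopy equivalence. -/
theorem stmt3 {C : Type u} [Category.{v} C] [Abelian C] (X : CubConn C)
    (ND : NormalizedData X.toPrecub) (Q : ChainComplex C ℕ) (π : ND.K ⟶ Q)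
    (hepi : ∀ n, Epi (π.f n))
    (hker : ∀ n, kernelSubobject (π.f n) = (Subobject.pullback (ND.ι n)).obj (FSub X n)) :
    ∃ σ : Q ⟶ ND.K,
      Nonempty (Homotopy (π ≫ σ) (𝟙 ND.K)) ∧ Nonempty (Homotopy (σ ≫ π) (𝟙 Q)) := by
  classical
  haveI : ∀ n, Epi (π.f n) := hepi
  -- `fmap` kills the kernel of `π`
  have hkill : ∀ n, (kernelSubobject (π.f n)).arrow ≫ fmap X ND n = 0 := by
    intro n
    have hfac0 : ((Subobject.pullback (ND.ι n)).obj (FSub X n)).Factors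
        ((kernelSubobject (π.f n)).arrow) := by
      rw [← hker n]; exact Subobject.factors_self _
    have hfac : (FSub X n).Factors ((kernelSubobject (π.f n)).arrow ≫ ND.ι n) :=
      (_root_.pullback_factors_iff (ND.ι n) (FSub X n) _).mp hfac0
    haveI := ND.ι_mono n
    rw [← cancel_mono (ND.ι n), Category.assoc, fmap_ι X ND n, zero_comp,
      ← Category.assoc, ← Subobject.factorThru_arrow _ _ hfac, Category.assoc,
      FSub_arrow_XPhi X ND n, comp_zero]
  have hwker : ∀ n, kernel.ι (π.f n) ≫ fmap X ND n = 0 := by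
    intro n
    rw [← kernelSubobject_arrow', Category.assoc, hkill n, comp_zero]
  -- the section σ
  let σf : ∀ n, Q.X n ⟶ ND.K.X n := fun n => Abelian.epiDesc (π.f n) (fmap X ND n) (hwker n)
  have hσ : ∀ n, π.f n ≫ σf n = fmap X ND n := fun n => Abelian.comp_epiDesc _ _ _
  let σ : Q ⟶ ND.K :=
    { f := σf
      comm' := by
        intro i j hij
        simp only [ComplexShape.down_Rel] at hij
        subst hij
        rw [← cancel_epi (π.f (j+1)), ← Category.assoc, hσ (j+1), ← fmap_comm X ND j,
          ← Category.assoc, π.comm (j+1) j, Category.assoc, hσ j] }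
  -- Γ and H kill π
  have hGamπ : ∀ m k, 1 ≤ k → k ≤ m + 1 → Gam X ND (m+1) k ≫ π.f (m+2) = 0 := by
    intro m k hk1 hk2
    have hfac : (FSub X (m+2)).Factors (Gam X ND (m+1) k ≫ ND.ι (m+2)) := by
      rw [Gam_ι X ND m k hk1 hk2]
      have hu := ι_factors_NSub X ND m
      rw [← Subobject.factorThru_arrow _ _ hu, Category.assoc]
      refine Subobject.factors_of_le _ (Finset.le_sup (Finset.mem_Icc.mpr ⟨hk1, hk2⟩)) ?_
      refine Subobject.factors_of_factors_right _ ?_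
      have h0 : (imageSubobject ((NSub X.toPrecub (m+1)).arrow ≫ X.conn m k)).Factors
          (factorThruImageSubobject ((NSub X.toPrecub (m+1)).arrow ≫ X.conn m k) ≫
            (imageSubobject ((NSub X.toPrecub (m+1)).arrow ≫ X.conn m k)).arrow) :=
        Subobject.factors_comp_arrow _
      rwa [imageSubobject_arrow_comp] at h0
    have h2 : (kernelSubobject (π.f (m+2))).Factors (Gam X ND (m+1) k) := by
      rw [hker (m+2)]
      exact (_root_.pullback_factors_iff _ _ _).mpr hfac
    rw [← Subobject.factorThru_arrow _ _ h2, Category.assoc, kernelSubobject_arrow_comp,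
      comp_zero]
  have hHπ : ∀ n, Hmap X ND n ≫ π.f (n+1) = 0 := by
    intro n
    rw [Hmap, HP, Preadditive.sum_comp]
    refine Finset.sum_eq_zero fun k hk => ?_
    obtain ⟨hk1, hk2⟩ := Finset.mem_Icc.mp hk
    obtain ⟨m, rfl⟩ : ∃ m, n = m + 1 := ⟨n - 1, by omega⟩
    rw [Preadditive.zsmul_comp, Category.assoc, hGamπ m k hk1 hk2,
      comp_zero, smul_zero]
  -- `fmap` is compatible with π
  have hfπ : ∀ n, fmap X ND n ≫ π.f n = π.f n := by
    intro n
    match n with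
    | 0 => rw [fmap_zero, Category.id_comp]
    | (m+1) =>
      have h1 : fmap X ND (m+1) = (Hmap X ND (m+1) ≫ ND.K.d (m+2) (m+1)
          + ND.K.d (m+1) m ≫ Hmap X ND m) + 𝟙 _ := by
        rw [main_homotopy X ND m, sub_add_cancel]
      rw [h1, Preadditive.add_comp, Preadditive.add_comp, Category.id_comp,
        Category.assoc, ← π.comm (m+2) (m+1),
        ← Category.assoc (Hmap X ND (m+1)), hHπ (m+1), zero_comp, zero_add,
        Category.assoc, hHπ m, comp_zero, zero_add]
  have hσπ : σ ≫ π = 𝟙 Q := by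
    ext n
    simp only [HomologicalComplex.comp_f, HomologicalComplex.id_f]
    rw [← cancel_epi (π.f n), ← Category.assoc, hσ n, hfπ n, Category.comp_id]
  -- the homotopy π ≫ σ ≃ 𝟙
  have hcomp : ∀ n, (π ≫ σ).f n = fmap X ND n := by
    intro n
    simp only [HomologicalComplex.comp_f]
    exact hσ n
  let hfun : ∀ i j, ND.K.X i ⟶ ND.K.X j := fun i j =>
    if h : i + 1 = j then Hmap X ND i ≫ eqToHom (congrArg ND.K.X h) else 0
  have hfun_eq : ∀ i, hfun i (i+1) = Hmap X ND i := fun i => by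
    simp only [hfun, dif_pos rfl, eqToHom_refl, Category.comp_id]
  have hty : Homotopy (π ≫ σ) (𝟙 ND.K) :=
    { hom := hfun
      zero := by
        intro i j hn
        refine dif_neg fun h => hn ?_
        simp only [ComplexShape.down_Rel]
        exact h
      comm := by
        intro n
        have hprev : prevD n hfun = Hmap X ND n ≫ ND.K.d (n+1) n := by
          rw [prevD_eq hfun (show (ComplexShape.down ℕ).Rel (n+1) n by simp), hfun_eq n]
        rw [hcomp n, HomologicalComplex.id_f]
        match n with
        | 0 =>
          have hd : dNext 0 hfun = 0 := by
            refine dNext_eq_zero hfun 0 ?_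
            simp
          rw [hd, hprev, fmap_zero, Hmap_zero, zero_comp, zero_add, zero_add]
        | (m+1) =>
          have hd : dNext (m+1) hfun = ND.K.d (m+1) m ≫ hfun m (m+1) := by
            exact dNext_eq hfun (show (ComplexShape.down ℕ).Rel (m+1) m by simp)
          rw [hd, hfun_eq m, hprev]
          have h' : fmap X ND (m+1) = (Hmap X ND (m+1) ≫ ND.K.d (m+2) (m+1)
              + ND.K.d (m+1) m ≫ Hmap X ND m) + 𝟙 _ := by
            rw [main_homotopy X ND m, sub_add_cancel]
          rw [h']
          abel }
  exact ⟨σ, ⟨hty⟩, ⟨Homotopy.ofEq hσπ⟩⟩
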